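/- If T = (A_1 \otimes ... \otimes A_k) IMM_n^k is a restriction of the order-k iterated matrix multiplication tensor and rank(A_k) = 1, then T factors as T = S \otimes w where w is a vector and S is a restriction of IMM_n^{k-1}. -/
import Mathlib


open scoped BigOperators

/-- Contraction of the first index of a 3-tensor with a covector, giving a matrix. -/
noncomputable def contr1 {ι₁ ι₂ ι₃ : Type*} [Fintype ι₁]
    (β : ι₁ → ℂ) (T : ι₁ → ι₂ → ι₃ → ℂ) : Matrix ι₂ ι₃ ℂ :=
  Matrix.of fun j k => ∑ i, β i * T i j k

/-- Contraction of the second index. -/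
noncomputable def contr2 {ι₁ ι₂ ι₃ : Type*} [Fintype ι₂]
    (γ : ι₂ → ℂ) (T : ι₁ → ι₂ → ι₃ → ℂ) : Matrix ι₁ ι₃ ℂ :=
  Matrix.of fun i k => ∑ j, γ j * T i j k

/-- Contraction of the third index. -/
noncomputable def contr3 {ι₁ ι₂ ι₃ : Type*} [Fintype ι₃]
    (δ : ι₃ → ℂ) (T : ι₁ → ι₂ → ι₃ → ℂ) : Matrix ι₁ ι₂ ℂ :=
  Matrix.of fun i j => ∑ k, δ k * T i j k

/-- Restriction `(A ⊗ B ⊗ C) T` of a 3-tensor. -/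
noncomputable def restrict {ι₁ ι₂ ι₃ κ₁ κ₂ κ₃ : Type*}
    [Fintype ι₁] [Fintype ι₂] [Fintype ι₃]
    (A : Matrix κ₁ ι₁ ℂ) (B : Matrix κ₂ ι₂ ℂ) (C : Matrix κ₃ ι₃ ℂ)
    (T : ι₁ → ι₂ → ι₃ → ℂ) : κ₁ → κ₂ → κ₃ → ℂ :=
  fun x y z => ∑ i, ∑ j, ∑ k, A x i * B y j * C z k * T i j k

/-- The polynomial multiplication tensor `P_{a,b}` (zero-based indices). -/
noncomputable def polyMul (a b : ℕ) : Fin a → Fin b → Fin (a + b - 1) → ℂ :=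
  fun i j k => if (k : ℕ) = (i : ℕ) + (j : ℕ) then 1 else 0

/-- The unit tensor `⟨r⟩`. -/
noncomputable def unitTensor (r : ℕ) : Fin r → Fin r → Fin r → ℂ :=
  fun i j k => if i = j ∧ j = k then 1 else 0

/-- The matrix multiplication tensor `M_n`. -/
noncomputable def MM (n : ℕ) :
    (Fin n × Fin n) → (Fin n × Fin n) → (Fin n × Fin n) → ℂ :=
  fun p q r => if p.2 = q.1 ∧ q.2 = r.1 ∧ r.2 = p.1 then 1 else 0

/-- Minrank of a 3-tensor (w.r.t. first-index slices). -/
noncomputable def minrank {a b c : ℕ} (T : Fin a → Fin b → Fin c → ℂ) : ℕ :=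
  sInf {r | ∃ β : Fin a → ℂ, contr1 β T ≠ 0 ∧ (contr1 β T).rank = r}

/-- A tensor is concise if all three flattenings are injective, i.e. all nonzero
contractions are nonzero matrices. -/
def Concise {a b c : ℕ} (T : Fin a → Fin b → Fin c → ℂ) : Prop :=
  (∀ β : Fin a → ℂ, β ≠ 0 → contr1 β T ≠ 0) ∧
  (∀ γ : Fin b → ℂ, γ ≠ 0 → contr2 γ T ≠ 0) ∧
  (∀ δ : Fin c → ℂ, δ ≠ 0 → contr3 δ T ≠ 0)

/-- Gram matrix of the first flattening, `T₁^* T₁`. -/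
noncomputable def gram1 {ι₁ ι₂ ι₃ : Type*} [Fintype ι₂] [Fintype ι₃]
    (T : ι₁ → ι₂ → ι₃ → ℂ) : Matrix ι₁ ι₁ ℂ :=
  Matrix.of fun i i' => ∑ j, ∑ k, (starRingEnd ℂ) (T i j k) * T i' j k

/-- Gram matrix of the second flattening. -/
noncomputable def gram2 {ι₁ ι₂ ι₃ : Type*} [Fintype ι₁] [Fintype ι₃]
    (T : ι₁ → ι₂ → ι₃ → ℂ) : Matrix ι₂ ι₂ ℂ :=
  Matrix.of fun j j' => ∑ i, ∑ k, (starRingEnd ℂ) (T i j k) * T i j' k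

/-- Gram matrix of the third flattening. -/
noncomputable def gram3 {ι₁ ι₂ ι₃ : Type*} [Fintype ι₁] [Fintype ι₂]
    (T : ι₁ → ι₂ → ι₃ → ℂ) : Matrix ι₃ ι₃ ℂ :=
  Matrix.of fun k k' => ∑ i, ∑ j, (starRingEnd ℂ) (T i j k) * T i j k'

/-- The tensor `M_{a,1,b}`. -/
noncomputable def Mab (a b : ℕ) : Fin a → Fin b → (Fin b × Fin a) → ℂ :=
  fun i k p => if p = (k, i) then 1 else 0

/-- The antisymmetric tensor `e₁ ∧ e₂ ∧ e₃`. -/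
noncomputable def wedge : Fin 3 → Fin 3 → Fin 3 → ℂ :=
  fun i j k => ∑ σ : Equiv.Perm (Fin 3),
    ((Equiv.Perm.sign σ : ℤ) : ℂ) * (if i = σ 0 ∧ j = σ 1 ∧ k = σ 2 then 1 else 0)

/-- The iterated matrix multiplication tensor of order `k`. -/
noncomputable def IMM (n k : ℕ) : (Fin k → Fin n × Fin n) → ℂ :=
  fun x => ∑ i : Fin k → Fin n, if ∀ ℓ : Fin k, x ℓ = (i ℓ, i ⟨((ℓ : ℕ) + 1) % k, Nat.mod_lt _ ℓ.pos⟩) then 1 else 0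

/-- Restriction of an order-`k` tensor by applying a linear map to each factor. -/
noncomputable def restrictK {k : ℕ} {ι κ : Fin k → Type*} [∀ ℓ, Fintype (ι ℓ)]
    (A : ∀ ℓ, Matrix (κ ℓ) (ι ℓ) ℂ) (T : (∀ ℓ, ι ℓ) → ℂ) : (∀ ℓ, κ ℓ) → ℂ :=
  fun x => ∑ y : ∀ ℓ, ι ℓ, (∏ ℓ, A ℓ (x ℓ) (y ℓ)) * T y

lemma rank_one_factor {m p : Type*} [Fintype m] [Fintype p]
    (A : Matrix m p ℂ) (hA : A.rank = 1) :
    ∃ (w : m → ℂ) (v : p → ℂ), ∀ x q, A x q = w x * v q := by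
  classical
  cases nonempty_fintype m
  rw [Matrix.rank_eq_finrank_span_row, finrank_eq_one_iff'] at hA
  obtain ⟨v, hv0, hspan⟩ := hA
  choose c hc using hspan
  refine ⟨fun x => c ⟨A x, Submodule.subset_span ⟨x, rfl⟩⟩, fun q => (v : p → ℂ) q, ?_⟩
  intro x q
  have h := hc ⟨A x, Submodule.subset_span ⟨x, rfl⟩⟩
  have h2 := congrArg (fun u : (Submodule.span ℂ (Set.range A)) => (u : p → ℂ) q) h
  simpa using h2.symm

lemma snoc_dite {α : Type*} {m : ℕ} (j : Fin (m+1) → α) (b : α) (t : Fin (m+2)) :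
    (Fin.snoc j b : Fin (m+2) → α) t = if h : (t:ℕ) < m+1 then j ⟨t, h⟩ else b := by
  split
  · next h =>
    have ht : t = Fin.castSucc ⟨t, h⟩ := by ext; simp
    conv_lhs => rw [ht]
    exact Fin.snoc_castSucc ..
  · next h =>
    have ht : t = Fin.last (m+1) := by ext; simp; omega
    rw [ht, Fin.snoc_last]

lemma snoc_at' {α : Type*} {m : ℕ} (j : Fin (m+1) → α) (b : α) (t : Fin (m+2)) (h : (t:ℕ) < m+1) :
    (Fin.snoc j b : Fin (m+2) → α) t = j ⟨t, h⟩ := by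
  have ht : t = Fin.castSucc ⟨t, h⟩ := by ext; simp
  conv_lhs => rw [ht]
  exact Fin.snoc_castSucc ..

lemma restrictK_IMM {n m : ℕ} {κ : Fin m → Type} [∀ ℓ, Fintype (κ ℓ)]
    (A : ∀ ℓ : Fin m, Matrix (κ ℓ) (Fin n × Fin n) ℂ) (x : ∀ ℓ, κ ℓ) :
    restrictK A (IMM n m) x
      = ∑ i : Fin m → Fin n,
          ∏ ℓ, A ℓ (x ℓ) (i ℓ, i ⟨((ℓ : ℕ) + 1) % m, Nat.mod_lt _ ℓ.pos⟩) := by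
  classical
  unfold restrictK IMM
  simp only [Finset.mul_sum]
  rw [Finset.sum_comm]
  refine Finset.sum_congr rfl fun i _ => ?_
  rw [Finset.sum_eq_single
    (fun ℓ => ((i ℓ, i ⟨((ℓ : ℕ) + 1) % m, Nat.mod_lt _ ℓ.pos⟩) : Fin n × Fin n))]
  · rw [if_pos fun ℓ => rfl, mul_one]
  · intro y _ hy
    rw [if_neg, mul_zero]
    intro h; exact hy (funext h)
  · intro h; exact absurd (Finset.mem_univ _) h

/-- a restriction of `IMM_n^{k+1}` whose last map has rank 1
factors as `S ⊗ w` with `S` a restriction of `IMM_n^k`. -/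
theorem IMM_restriction_rank_one_factor (n k : ℕ) (hk : 2 ≤ k)
    (κ : Fin (k + 1) → Type) [∀ ℓ, Fintype (κ ℓ)]
    (A : ∀ ℓ : Fin (k + 1), Matrix (κ ℓ) (Fin n × Fin n) ℂ)
    (hA : (A (Fin.last k)).rank = 1)
    (T : (∀ ℓ : Fin (k + 1), κ ℓ) → ℂ)
    (hT : T = restrictK A (IMM n (k + 1))) :
    ∃ (w : κ (Fin.last k) → ℂ)
      (B : ∀ ℓ : Fin k, Matrix (κ ℓ.castSucc) (Fin n × Fin n) ℂ),
      ∀ x, T x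
        = restrictK B (IMM n k) (fun ℓ => x ℓ.castSucc) * w (x (Fin.last k)) := by
  classical
  obtain ⟨w, v, hwv⟩ := rank_one_factor (A (Fin.last k)) hA
  obtain ⟨m, rfl⟩ : ∃ m, k = m + 1 := ⟨k - 1, by omega⟩
  refine ⟨w, fun ℓ => Matrix.of fun z p =>
      if (ℓ : ℕ) = m then ∑ b : Fin n, A ℓ.castSucc z (p.1, b) * v (b, p.2)
      else A ℓ.castSucc z p, fun x => ?_⟩
  subst hT
  rw [restrictK_IMM, restrictK_IMM, Finset.sum_mul]
  rw [← Equiv.sum_comp (Fin.snocEquiv (fun _ : Fin (m+2) => Fin n))]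
  rw [Fintype.sum_prod_type, Finset.sum_comm]
  refine Finset.sum_congr rfl fun j _ => ?_
  -- RHS: split off last factor of the product and pull the b-sum out
  conv_rhs =>
    rw [Fin.prod_univ_castSucc]
  have hlast : (((Fin.last m : Fin (m+1)) : ℕ)) = m := rfl
  simp only [Matrix.of_apply, hlast, if_pos rfl]
  simp only [if_true]
  rw [Finset.mul_sum, Finset.sum_mul]
  refine Finset.sum_congr rfl fun b _ => ?_
  simp only [Fin.snocEquiv, Equiv.coe_fn_mk]
  rw [Fin.prod_univ_castSucc, Fin.prod_univ_castSucc]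
  simp only [snoc_dite]
  have e1 : ∀ ℓ : Fin m, ((ℓ:ℕ)+1) % (m+2) = (ℓ:ℕ)+1 := fun ℓ => Nat.mod_eq_of_lt (by omega)
  have e2 : ∀ ℓ : Fin m, ((ℓ:ℕ)+1) % (m+1) = (ℓ:ℕ)+1 := fun ℓ => Nat.mod_eq_of_lt (by omega)
  have c1 : ∀ ℓ : Fin m, (ℓ:ℕ) < m + 1 := fun ℓ => by omega
  have c2 : ∀ ℓ : Fin m, (ℓ:ℕ) + 1 < m + 1 := fun ℓ => by have := ℓ.isLt; omega
  have ne1 : ∀ ℓ : Fin m, ¬((ℓ:ℕ) = m) := fun ℓ => by have := ℓ.isLt; omega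
  have f3 : ∀ h : m < m + 1, (⟨m, h⟩ : Fin (m+1)) = Fin.last m := fun _ => rfl
  have f4 : ∀ (ℓ : Fin m) (h : (ℓ:ℕ) < m+1), (⟨(ℓ:ℕ), h⟩ : Fin (m+1)) = ℓ.castSucc :=
    fun _ _ => rfl
  have e3 : (m+1) % (m+2) = m+1 := Nat.mod_eq_of_lt (by omega)
  simp only [Fin.coe_castSucc, Fin.val_last, Nat.mod_self, e1, e2, c1, c2, ne1,
    Nat.lt_succ_self, Nat.lt_irrefl, Nat.succ_pos, dite_true, dite_false, if_false,
    dif_pos, dif_neg, not_false_iff, f3, f4, e3, hwv]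
  ring
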